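/- Let C be a linear [n,k,d]_q code over F_q with full-rank generator matrix G ∈ F_q^{k×n}, and let J_d = {v ∈ F_q^k : wgt(vG) = d}. Then there exists a matrix X ∈ F_q^{k×m} such that the code generated by (G | X) ∈ F_q^{k×(n+m)} has dimension k and minimum Hamming distance at least d+1 if and only if the system of polynomial equations Π_{j=1}^m ((Σ_{i=1}^k v_i X_{ij})^{q-1} − 1) = 0, one equation for each v ∈ J_d, has a solution X ∈ F_q^{k×m}. -/

import Mathlib

lemma hammingNorm_sumElim {α β F : Type*} [Fintype α] [Fintype β] [DecidableEq F] [Zero F]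
    (f : α → F) (g : β → F) :
    hammingNorm (Sum.elim f g) = hammingNorm f + hammingNorm g := by
  classical
  simp only [hammingNorm, Finset.card_filter, Fintype.sum_sum_type, Sum.elim_inl, Sum.elim_inr]
  congr 1

lemma vecMul_eq_zero_iff {F : Type*} [Field F] {k n : ℕ}
    {G : Matrix (Fin k) (Fin n) F}
    (hG : LinearIndependent F (fun i => G i)) (v : Fin k → F) :
    Matrix.vecMul v G = 0 ↔ v = 0 := by
  constructor
  · intro h
    have h2 : ∑ i, v i • G i = 0 := by
      ext j
      simpa [Matrix.vecMul, dotProduct] using congrFun h j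
    have := Fintype.linearIndependent_iff.mp hG v h2
    ext i; exact this i
  · rintro rfl; simp

/-- **General extensions via polynomial equations.**
A linear `[n,k,d]_q` code with full-rank generator matrix `G` can be extended
to a code of length `n+m`, dimension `k`, and minimum distance at least `d+1`
(generated by `(G|X)`) if and only if the system of polynomial equations
`Π_{j=1}^m ((Σᵢ vᵢ X_{ij})^(q-1) − 1) = 0`, one equation for each
`v ∈ J_d = {v : wgt(vG) = d}`, has a solution `X ∈ F_q^{k×m}`. -/
theorem general_extension_polynomial_system
    {F : Type*} [Field F] [Fintype F] [DecidableEq F]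
    (q n k m d : ℕ) (hq : Fintype.card F = q)
    (G : Matrix (Fin k) (Fin n) F)
    (hG : LinearIndependent F (fun i => G i))
    (hmin : ∀ v : Fin k → F, v ≠ 0 → d ≤ hammingNorm (Matrix.vecMul v G))
    (hex : ∃ v : Fin k → F, v ≠ 0 ∧ hammingNorm (Matrix.vecMul v G) = d) :
    (∃ X : Matrix (Fin k) (Fin m) F,
        LinearIndependent F (fun i => Matrix.fromCols G X i) ∧
        (∀ v : Fin k → F, v ≠ 0 →
          d + 1 ≤ hammingNorm (Matrix.vecMul v (Matrix.fromCols G X))))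
      ↔
    (∃ X : Matrix (Fin k) (Fin m) F,
        ∀ v : Fin k → F, hammingNorm (Matrix.vecMul v G) = d →
          ∏ j, ((∑ i, v i * X i j) ^ (q - 1) - 1) = 0) := by
  have hq1 : 1 < q := hq ▸ Fintype.one_lt_card
  -- d ≥ 1 : the v from hex is nonzero, so vG ≠ 0
  have hd1 : 1 ≤ d := by
    obtain ⟨v, hv, hvd⟩ := hex
    have : Matrix.vecMul v G ≠ 0 := fun h => hv ((vecMul_eq_zero_iff hG v).mp h)
    rw [← hvd]
    rwa [Nat.one_le_iff_ne_zero, Ne, hammingNorm_eq_zero]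
  have key : ∀ (X : Matrix (Fin k) (Fin m) F) (v : Fin k → F),
      hammingNorm (Matrix.vecMul v (Matrix.fromCols G X)) =
        hammingNorm (Matrix.vecMul v G) + hammingNorm (Matrix.vecMul v X) := by
    intro X v
    rw [Matrix.vecMul_fromCols, hammingNorm_sumElim]
  have hpow : ∀ (x : F), x ≠ 0 → x ^ (q - 1) = 1 := by
    intro x hx
    subst hq
    exact FiniteField.pow_card_sub_one_eq_one x hx
  constructor
  · rintro ⟨X, _, hdist⟩
    refine ⟨X, fun v hv => ?_⟩
    have hvne : v ≠ 0 := by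
      rintro rfl
      simp only [Matrix.zero_vecMul, hammingNorm_zero] at hv
      omega
    have h1 : d + 1 ≤ hammingNorm (Matrix.vecMul v (Matrix.fromCols G X)) := hdist v hvne
    rw [key X v, hv] at h1
    have h2 : hammingNorm (Matrix.vecMul v X) ≠ 0 := by omega
    rw [Ne, hammingNorm_eq_zero] at h2
    obtain ⟨j, hj⟩ : ∃ j, Matrix.vecMul v X j ≠ 0 := by
      by_contra h
      push_neg at h
      exact h2 (funext h)
    apply Finset.prod_eq_zero (Finset.mem_univ j)
    have : (∑ i, v i * X i j) = Matrix.vecMul v X j := by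
      simp [Matrix.vecMul, dotProduct]
    rw [this, hpow _ hj, sub_self]
  · rintro ⟨X, hX⟩
    refine ⟨X, ?_, fun v hv => ?_⟩
    · rw [Fintype.linearIndependent_iff]
      intro g hg
      have : Matrix.vecMul g (Matrix.fromCols G X) = 0 := by
        ext j
        have := congrFun hg j
        simpa [Matrix.vecMul, dotProduct] using this
      rw [Matrix.vecMul_fromCols] at this
      have hG0 : Matrix.vecMul g G = 0 := by
        ext j; exact congrFun this (Sum.inl j)
      intro i
      exact congrFun ((vecMul_eq_zero_iff hG g).mp hG0) i
    · rw [key X v]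
      rcases Nat.lt_or_ge d (hammingNorm (Matrix.vecMul v G)) with h | h
      · omega
      · have heq : hammingNorm (Matrix.vecMul v G) = d := le_antisymm h (hmin v hv)
        have hprod := hX v heq
        obtain ⟨j, _, hj⟩ := Finset.prod_eq_zero_iff.mp hprod
        have hne : (∑ i, v i * X i j) ≠ 0 := by
          intro h0
          rw [h0, zero_pow (by omega), zero_sub] at hj
          exact one_ne_zero (neg_eq_zero.mp hj)
        have : Matrix.vecMul v X j ≠ 0 := by
          simpa [Matrix.vecMul, dotProduct] using hne
        have : hammingNorm (Matrix.vecMul v X) ≠ 0 := by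
          rw [Ne, hammingNorm_eq_zero]
          intro h0
          exact this (congrFun h0 j)
        omega
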